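/- Let A and B be real symmetric n×n matrices. If II_≻(A,B) ≠ ∅, i.e., there exist μ, σ ∈ ℝ with μA + σB positive definite, then Q(A) ∩ Q(B) = {0}. Conversely, if n ≥ 3 and Q(A) ∩ Q(B) = {0}, then II_≻(A,B) ≠ ∅. -/

import Mathlib

open Matrix Complex

namespace Stmt1Aux
variable {n : ℕ}

lemma cont_q (M : Matrix (Fin n) (Fin n) ℝ) :
    Continuous fun x : Fin n → ℝ => x ⬝ᵥ M *ᵥ x := by
  simp only [dotProduct, mulVec]
  exact continuous_finset_sum _ fun i _ => (continuous_apply i).mul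
    (continuous_finset_sum _ fun j _ => continuous_const.mul (continuous_apply j))

lemma cont_bil (M : Matrix (Fin n) (Fin n) ℝ) (v : Fin n → ℝ) :
    Continuous fun x : Fin n → ℝ => v ⬝ᵥ M *ᵥ x := by
  simp only [dotProduct, mulVec]
  exact continuous_finset_sum _ fun i _ => continuous_const.mul
    (continuous_finset_sum _ fun j _ => continuous_const.mul (continuous_apply j))

lemma bil_symm {M : Matrix (Fin n) (Fin n) ℝ} (hM : M.IsSymm) (x y : Fin n → ℝ) :
    x ⬝ᵥ M *ᵥ y = y ⬝ᵥ M *ᵥ x := by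
  rw [dotProduct_mulVec, dotProduct_comm, ← mulVec_transpose, hM]

lemma bil_lin (M : Matrix (Fin n) (Fin n) ℝ) (v x y : Fin n → ℝ) (a b : ℝ) :
    v ⬝ᵥ M *ᵥ (a • x + b • y) = a * (v ⬝ᵥ M *ᵥ x) + b * (v ⬝ᵥ M *ᵥ y) := by
  simp [mulVec_add, mulVec_smul, dotProduct_add, dotProduct_smul, smul_eq_mul]

lemma quad_expand {M : Matrix (Fin n) (Fin n) ℝ} (hM : M.IsSymm) (x y : Fin n → ℝ) (a b : ℝ) :
    (a • x + b • y) ⬝ᵥ M *ᵥ (a • x + b • y)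
      = a^2 * (x ⬝ᵥ M *ᵥ x) + 2*a*b * (x ⬝ᵥ M *ᵥ y) + b^2 * (y ⬝ᵥ M *ᵥ y) := by
  simp only [mulVec_add, mulVec_smul, dotProduct_add, dotProduct_smul, add_dotProduct,
    smul_dotProduct, smul_eq_mul]
  rw [bil_symm hM y x]
  ring

lemma quad_smul (M : Matrix (Fin n) (Fin n) ℝ) (c : ℝ) (x : Fin n → ℝ) :
    (c • x) ⬝ᵥ M *ᵥ (c • x) = c^2 * (x ⬝ᵥ M *ᵥ x) := by
  simp [mulVec_smul, dotProduct_smul, smul_dotProduct, smul_eq_mul]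
  ring

lemma quad_comb (A B : Matrix (Fin n) (Fin n) ℝ) (c d : ℝ) (x : Fin n → ℝ) :
    x ⬝ᵥ (c • A + d • B) *ᵥ x = c * (x ⬝ᵥ A *ᵥ x) + d * (x ⬝ᵥ B *ᵥ x) := by
  simp [add_mulVec, smul_mulVec, dotProduct_add, dotProduct_smul, smul_eq_mul]

lemma ivt_aux {f : ℝ → ℝ} (hf : Continuous f) (h0 : 0 < f 0) (h1 : f 1 < 0) :
    ∃ t ∈ Set.Icc (0:ℝ) 1, f t = 0 := by
  have h := intermediate_value_Icc' (zero_le_one) hf.continuousOn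
  obtain ⟨t, ht, h⟩ := h ⟨h1.le, h0.le⟩
  exact ⟨t, ht, h⟩

/-- Core lemma: if `n ≥ 3`, `C` is symmetric, `v, w` are isotropic for `C` and `D`
takes opposite signs at `v, w`, then there is a nonzero common isotropic vector. -/
lemma core (hn : 3 ≤ n) {C D : Matrix (Fin n) (Fin n) ℝ} (hC : C.IsSymm)
    {v w : Fin n → ℝ} (hCv : v ⬝ᵥ C *ᵥ v = 0) (hCw : w ⬝ᵥ C *ᵥ w = 0)
    (hDv : 0 < v ⬝ᵥ D *ᵥ v) (hDw : w ⬝ᵥ D *ᵥ w < 0) :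
    ∃ u, u ≠ 0 ∧ u ⬝ᵥ C *ᵥ u = 0 ∧ u ⬝ᵥ D *ᵥ u = 0 := by
  have hv0 : v ≠ 0 := by rintro rfl; simp at hDv
  have hw0 : w ≠ 0 := by rintro rfl; simp at hDw
  -- w is not a multiple of v
  have hwv : ∀ c : ℝ, w ≠ c • v := by
    intro c hc
    rw [hc, quad_smul] at hDw
    nlinarith [sq_nonneg c]
  by_cases hβ : v ⬝ᵥ C *ᵥ w = 0
  · -- Case 1: the plane span{v,w} is totally isotropic for C
    obtain ⟨t, _, ht⟩ := ivt_aux (f := fun t => ((1-t) • v + t • w) ⬝ᵥ D *ᵥ ((1-t) • v + t • w))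
      (by
        apply (cont_q D).comp
        exact ((continuous_const.sub continuous_id).smul continuous_const).add
          (continuous_id.smul continuous_const))
      (by simpa using hDv) (by simpa using hDw)
    refine ⟨(1-t) • v + t • w, ?_, ?_, ht⟩
    · intro h0
      rcases eq_or_ne t 0 with rfl | htne
      · simp at h0; exact hv0 h0
      · apply hwv (-(1-t)/t)
        have : t • w = -((1-t) • v) := by
          rw [eq_neg_iff_add_eq_zero, add_comm]; exact h0
        apply smul_right_injective (Fin n → ℝ) htne
        show t • _ = t • _
        rw [this, smul_smul, ← neg_smul]
        congr 1
        field_simp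
    · rw [quad_expand hC, hCv, hCw, hβ]; ring
  · -- Case 2: v ⬝ C w ≠ 0
    by_cases hdeg : ∃ p, v ⬝ᵥ C *ᵥ p = 0 ∧ p ⬝ᵥ C *ᵥ p ≠ 0
    · -- Case 2a: conic parametrization from v
      obtain ⟨p, hp1, hp2⟩ := hdeg
      set φ : (Fin n → ℝ) → (Fin n → ℝ) :=
        fun y => (y ⬝ᵥ C *ᵥ y) • v + (-(2 * (v ⬝ᵥ C *ᵥ y))) • y with hφ
      have hφC : ∀ y, (φ y) ⬝ᵥ C *ᵥ (φ y) = 0 := by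
        intro y
        rw [hφ]
        rw [quad_expand hC, hCv]
        ring
      set y : ℝ → (Fin n → ℝ) := fun t => (1-t) • p + t • w with hy
      have hby : ∀ t, v ⬝ᵥ C *ᵥ (y t) = t * (v ⬝ᵥ C *ᵥ w) := by
        intro t; rw [hy]; rw [bil_lin, hp1]; ring
      have hcont : Continuous fun t => (φ (y t)) ⬝ᵥ D *ᵥ (φ (y t)) := by
        apply (cont_q D).comp
        have hφcont : Continuous φ := by
          apply Continuous.add
          · exact (cont_q C).smul continuous_const
          · exact ((continuous_const.mul (cont_bil C v)).neg).smul continuous_id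
        apply hφcont.comp
        exact ((continuous_const.sub continuous_id).smul continuous_const).add
          (continuous_id.smul continuous_const)
      have h0 : φ (y 0) = (p ⬝ᵥ C *ᵥ p) • v := by
        rw [hφ, hy]; simp [hp1]
      have h1 : φ (y 1) = (-(2 * (v ⬝ᵥ C *ᵥ w))) • w := by
        rw [hφ, hy]; simp [hCw]
      have hsq : (0:ℝ) < (p ⬝ᵥ C *ᵥ p)^2 := sq_pos_of_ne_zero hp2
      have hsq2 : (0:ℝ) < (-(2 * (v ⬝ᵥ C *ᵥ w)))^2 :=
        sq_pos_of_ne_zero (by intro h; apply hβ; linarith [neg_eq_zero.mp h])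
      obtain ⟨t, _, ht⟩ := ivt_aux hcont
        (by rw [h0, quad_smul]; exact mul_pos hsq hDv)
        (by rw [h1, quad_smul]; exact mul_neg_of_pos_of_neg hsq2 hDw)
      have htne : t ≠ 0 := by
        rintro rfl
        rw [h0, quad_smul] at ht
        nlinarith [mul_pos hsq hDv]
      refine ⟨φ (y t), ?_, hφC _, ht⟩
      intro hzero
      have : v ⬝ᵥ C *ᵥ (φ (y t)) = 0 := by rw [hzero]; simp
      rw [hφ, bil_lin, hCv, hby] at this
      have : t * (v ⬝ᵥ C *ᵥ w) = 0 := by nlinarith [this]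
      rcases mul_eq_zero.mp this with h | h
      · exact htne h
      · exact hβ h
    · -- Case 2b: C vanishes on the hyperplane orthogonal to v
      push_neg at hdeg
      by_cases hneg : ∃ h, v ⬝ᵥ C *ᵥ h = 0 ∧ h ⬝ᵥ D *ᵥ h < 0
      · obtain ⟨h, hh1, hh2⟩ := hneg
        have hh0 : h ≠ 0 := by rintro rfl; simp at hh2
        have hhv : ∀ c : ℝ, h ≠ c • v := by
          intro c hc; rw [hc, quad_smul] at hh2; nlinarith [sq_nonneg c]
        obtain ⟨t, _, ht⟩ := ivt_aux
          (f := fun t => ((1-t) • v + t • h) ⬝ᵥ D *ᵥ ((1-t) • v + t • h))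
          (by
            apply (cont_q D).comp
            exact ((continuous_const.sub continuous_id).smul continuous_const).add
              (continuous_id.smul continuous_const))
          (by simpa using hDv) (by simpa using hh2)
        refine ⟨(1-t) • v + t • h, ?_, ?_, ht⟩
        · intro h0
          rcases eq_or_ne t 0 with rfl | htne
          · simp at h0; exact hv0 h0
          · apply hhv (-(1-t)/t)
            have : t • h = -((1-t) • v) := by rw [eq_neg_iff_add_eq_zero, add_comm]; exact h0
            apply smul_right_injective (Fin n → ℝ) htne
            show t • _ = t • _
            rw [this, smul_smul, ← neg_smul]
            congr 1
            field_simp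
        · apply hdeg
          rw [bil_lin, hCv, hh1]; ring
      · push_neg at hneg
        -- find k ≠ 0 orthogonal (w.r.t. C) to both v and w
        have hker : ∃ k : Fin n → ℝ, k ≠ 0 ∧ v ⬝ᵥ C *ᵥ k = 0 ∧ w ⬝ᵥ C *ᵥ k = 0 := by
          set L : (Fin n → ℝ) →ₗ[ℝ] ℝ × ℝ :=
            { toFun := fun y => (v ⬝ᵥ C *ᵥ y, w ⬝ᵥ C *ᵥ y)
              map_add' := by intro a b; simp [mulVec_add, dotProduct_add]
              map_smul' := by intro c a; simp [mulVec_smul, dotProduct_smul, smul_eq_mul] }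
          have hninj : ¬ Function.Injective L := by
            intro hinj
            have h1 := LinearMap.finrank_le_finrank_of_injective hinj
            rw [Module.finrank_fin_fun] at h1
            rw [Module.finrank_prod, Module.finrank_self] at h1
            omega
          rw [Function.not_injective_iff] at hninj
          obtain ⟨a, b, hab, hne⟩ := hninj
          have hLk : L (a - b) = 0 := by rw [map_sub, hab, sub_self]
          simp only [L, LinearMap.coe_mk, AddHom.coe_mk, Prod.ext_iff, Prod.fst_zero,
            Prod.snd_zero] at hLk
          exact ⟨a - b, sub_ne_zero.mpr hne, hLk.1, hLk.2⟩
        obtain ⟨k, hk0, hkv, hkw⟩ := hker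
        have hCk : k ⬝ᵥ C *ᵥ k = 0 := hdeg k hkv
        have hDk : 0 ≤ k ⬝ᵥ D *ᵥ k := hneg k hkv
        rcases eq_or_lt_of_le hDk with heq | hlt
        · exact ⟨k, hk0, hCk, heq.symm⟩
        · obtain ⟨t, _, ht⟩ := ivt_aux
            (f := fun t => ((1-t) • k + t • w) ⬝ᵥ D *ᵥ ((1-t) • k + t • w))
            (by
              apply (cont_q D).comp
              exact ((continuous_const.sub continuous_id).smul continuous_const).add
                (continuous_id.smul continuous_const))
            (by simpa using hlt) (by simpa using hDw)
          refine ⟨(1-t) • k + t • w, ?_, ?_, ht⟩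
          · intro h0
            rcases eq_or_ne t 0 with rfl | htne
            · simp at h0; exact hk0 h0
            · apply hβ
              have hwk : w = (-(1-t)/t) • k := by
                have hsm : t • w = -((1-t) • k) := by
                  rw [eq_neg_iff_add_eq_zero, add_comm]; exact h0
                apply smul_right_injective (Fin n → ℝ) htne
                show t • _ = t • _
                rw [hsm, smul_smul, ← neg_smul]
                congr 1
                field_simp
              rw [hwk, mulVec_smul, dotProduct_smul, hkv, smul_eq_mul, mul_zero]
          · rw [quad_expand hC, hCk, hCw, bil_symm hC k w, hkw]
            ring



lemma isHermitian_of_isSymm {M : Matrix (Fin n) (Fin n) ℝ} (h : M.IsSymm) : M.IsHermitian := by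
  rw [Matrix.IsHermitian, conjTranspose_eq_transpose_of_trivial]
  exact h

/-- The antipodal-free property: no two nonzero vectors have opposite
joint quadratic values. -/
lemma antipodal (A B : Matrix (Fin n) (Fin n) ℝ) (hA : A.IsSymm) (hB : B.IsSymm) (hn : 3 ≤ n)
    (hQ : ∀ x : Fin n → ℝ, x ⬝ᵥ A *ᵥ x = 0 → x ⬝ᵥ B *ᵥ x = 0 → x = 0)
    (x y : Fin n → ℝ) (hx : x ≠ 0) (hy : y ≠ 0) (t : ℝ) (ht : 0 < t)
    (hax : x ⬝ᵥ A *ᵥ x = -(t * (y ⬝ᵥ A *ᵥ y)))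
    (hbx : x ⬝ᵥ B *ᵥ x = -(t * (y ⬝ᵥ B *ᵥ y))) : False := by
  set p := x ⬝ᵥ A *ᵥ x with hp
  set q := x ⬝ᵥ B *ᵥ x with hq
  have hpq : p ≠ 0 ∨ q ≠ 0 := by
    by_contra h
    push_neg at h
    exact hx (hQ x h.1 h.2)
  have hpq2 : 0 < p^2 + q^2 := by
    rcases hpq with h | h
    · have := sq_pos_of_ne_zero h; nlinarith [sq_nonneg q]
    · have := sq_pos_of_ne_zero h; nlinarith [sq_nonneg p]
  set C := q • A + (-p) • B with hCdef
  set D := p • A + q • B with hDdef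
  have hCsymm : C.IsSymm := by
    rw [hCdef, Matrix.IsSymm, transpose_add, transpose_smul, transpose_smul, hA, hB]
  have hay : y ⬝ᵥ A *ᵥ y = -(p / t) := by
    field_simp at hax ⊢
    linarith
  have hby : y ⬝ᵥ B *ᵥ y = -(q / t) := by
    field_simp at hbx ⊢
    linarith
  have hCx : x ⬝ᵥ C *ᵥ x = 0 := by rw [hCdef, quad_comb, ← hp, ← hq]; ring
  have hCy : y ⬝ᵥ C *ᵥ y = 0 := by rw [hCdef, quad_comb, hay, hby]; ring
  have hDx : 0 < x ⬝ᵥ D *ᵥ x := by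
    rw [hDdef, quad_comb, ← hp, ← hq]
    calc (0:ℝ) < p^2 + q^2 := hpq2
    _ = p * p + q * q := by ring
  have hDy : y ⬝ᵥ D *ᵥ y < 0 := by
    rw [hDdef, quad_comb, hay, hby]
    have : p * -(p / t) + q * -(q / t) = -((p^2 + q^2)/t) := by ring
    rw [this]
    have := div_pos hpq2 ht
    linarith
  obtain ⟨u, hu0, hCu, hDu⟩ := core hn hCsymm hCx hCy hDx hDy
  rw [hCdef, quad_comb] at hCu
  rw [hDdef, quad_comb] at hDu
  have hau : u ⬝ᵥ A *ᵥ u = 0 := by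
    have h1 : (p^2 + q^2) * (u ⬝ᵥ A *ᵥ u) = 0 := by linear_combination p * hDu + q * hCu
    rcases mul_eq_zero.mp h1 with h | h
    · exact absurd h (by positivity)
    · exact h
  have hbu : u ⬝ᵥ B *ᵥ u = 0 := by
    have h1 : (p^2 + q^2) * (u ⬝ᵥ B *ᵥ u) = 0 := by linear_combination q * hDu - p * hCu
    rcases mul_eq_zero.mp h1 with h | h
    · exact absurd h (by positivity)
    · exact h
  exact hu0 (hQ u hau hbu)

/-- Main converse direction: separation via the complex argument. -/
lemma converse (A B : Matrix (Fin n) (Fin n) ℝ) (hA : A.IsSymm) (hB : B.IsSymm) (hn : 3 ≤ n)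
    (hQ : ∀ x : Fin n → ℝ, x ⬝ᵥ A *ᵥ x = 0 → x ⬝ᵥ B *ᵥ x = 0 → x = 0) :
    ∃ μ σ : ℝ, (μ • A + σ • B).PosDef := by
  have hnn : Nonempty (Fin n) := ⟨⟨0, by omega⟩⟩
  set g : (Fin n → ℝ) → ℂ := fun x => (↑(x ⬝ᵥ A *ᵥ x) : ℂ) + (↑(x ⬝ᵥ B *ᵥ x) : ℂ) * Complex.I
    with hg
  have hgre : ∀ x, (g x).re = x ⬝ᵥ A *ᵥ x := by intro x; simp [hg]
  have hgim : ∀ x, (g x).im = x ⬝ᵥ B *ᵥ x := by intro x; simp [hg]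
  have hg0 : ∀ x : Fin n → ℝ, x ≠ 0 → g x ≠ 0 := by
    intro x hx h
    apply hx
    apply hQ x
    · rw [← hgre x, h]; simp
    · rw [← hgim x, h]; simp
  have hgcont : Continuous g := by
    apply Continuous.add
    · exact Complex.continuous_ofReal.comp (cont_q A)
    · exact (Complex.continuous_ofReal.comp (cont_q B)).mul continuous_const
  -- antipodal-free in complex form
  have hanti : ∀ x y : Fin n → ℝ, x ≠ 0 → y ≠ 0 → ∀ t : ℝ, 0 < t →
      g x ≠ -(↑t) * g y := by
    intro x y hx hy t ht heq
    apply antipodal A B hA hB hn hQ x y hx hy t ht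
    · rw [← hgre x, heq]; simp [hgre, hgim]
    · rw [← hgim x, heq]; simp [hgre, hgim]
  set S := Metric.sphere (0 : Fin n → ℝ) 1 with hS
  have hSne : ∀ x, x ∈ S → x ≠ 0 := by
    intro x hxS hx0
    rw [hS, mem_sphere_zero_iff_norm] at hxS
    rw [hx0] at hxS
    simp at hxS
  set x₀ : Fin n → ℝ := fun _ => 1 with hx₀def
  have hx₀S : x₀ ∈ S := by
    rw [hS, mem_sphere_zero_iff_norm, hx₀def]
    exact (pi_norm_const (1:ℝ)).trans (by simp)
  have hx₀0 : x₀ ≠ 0 := hSne x₀ hx₀S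
  set g₀ : ℂ := g x₀ with hg₀
  have hg₀0 : g₀ ≠ 0 := hg0 x₀ hx₀0
  set h : (Fin n → ℝ) → ℂ := fun x => g x * (starRingEnd ℂ) g₀ with hh
  have hconj0 : (starRingEnd ℂ) g₀ ≠ 0 := by
    simpa using hg₀0
  have hh0 : ∀ x, x ≠ 0 → h x ≠ 0 := fun x hx => mul_ne_zero (hg0 x hx) hconj0
  -- key: no point of S maps to a negative real multiple of another
  have key : ∀ x y : Fin n → ℝ, x ∈ S → y ∈ S → ∀ c : ℝ, c < 0 →
      h x = (c:ℂ) * h y → False := by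
    intro x y hxS hyS c hc heq
    have hzero : (g x - (c:ℂ) * g y) * (starRingEnd ℂ) g₀ = 0 := by
      have : h x - (c:ℂ) * h y = 0 := by rw [heq]; ring
      rw [hh] at this
      simp only at this
      calc (g x - (c:ℂ) * g y) * (starRingEnd ℂ) g₀
          = g x * (starRingEnd ℂ) g₀ - (c:ℂ) * (g y * (starRingEnd ℂ) g₀) := by ring
        _ = 0 := this
    have hgxy : g x = (c:ℂ) * g y := by
      rcases mul_eq_zero.mp hzero with h' | h'
      · exact sub_eq_zero.mp h'
      · exact absurd h' hconj0
    apply hanti x y (hSne _ hxS) (hSne _ hyS) (-c) (by linarith)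
    rw [hgxy]
    push_cast
    ring
  -- all values lie in the slit plane after rotating by conj g₀
  have slit : ∀ x ∈ S, h x ∈ Complex.slitPlane := by
    intro x hxS
    rw [Complex.mem_slitPlane_iff]
    by_contra hcon
    push_neg at hcon
    obtain ⟨hre, him⟩ := hcon
    have hxne := hSne x hxS
    have hne := hh0 x hxne
    have hxr : h x = ((h x).re : ℂ) := Complex.ext rfl (by simp [him])
    have hrene : (h x).re ≠ 0 := by
      intro h0
      exact hne (by rw [hxr, h0]; simp)
    have hrneg : (h x).re < 0 := lt_of_le_of_ne hre hrene
    have hx₀h : h x₀ = ((Complex.normSq g₀ : ℝ) : ℂ) := by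
      rw [hh]
      exact Complex.mul_conj g₀
    have hnsq : 0 < Complex.normSq g₀ := Complex.normSq_pos.mpr hg₀0
    apply key x x₀ hxS hx₀S ((h x).re / Complex.normSq g₀)
      (div_neg_of_neg_of_pos hrneg hnsq)
    rw [hx₀h]
    nth_rewrite 1 [hxr]
    push_cast
    field_simp
    rw [mul_div_assoc, div_self (by exact_mod_cast hnsq.ne'), mul_one]
  set θ : (Fin n → ℝ) → ℝ := fun x => (h x).arg with hθ
  have hhcont : Continuous h := hgcont.mul continuous_const
  have contθ : ContinuousOn θ S := fun x hxS =>
    ((Complex.continuousAt_arg (slit x hxS)).comp hhcont.continuousAt).continuousWithinAt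
  set K := θ '' S with hK
  have hKne : K.Nonempty := ⟨θ x₀, ⟨x₀, hx₀S, rfl⟩⟩
  have hKcpt : IsCompact K := (isCompact_sphere 0 1).image_of_continuousOn contθ
  have hrank : 1 < Module.rank ℝ (Fin n → ℝ) := by
    rw [rank_fin_fun]
    exact_mod_cast (by omega : 1 < n)
  have hKconn : IsPreconnected K :=
    ((isConnected_sphere hrank 0 zero_le_one).image θ contθ).isPreconnected
  set lo := sInf K with hlo
  set hi := sSup K with hhi
  obtain ⟨xlo, hxloS, hxloθ⟩ := hKcpt.sInf_mem hKne
  obtain ⟨xhi, hxhiS, hxhiθ⟩ := hKcpt.sSup_mem hKne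
  rw [← hlo] at hxloθ
  rw [← hhi] at hxhiθ
  have gap : hi - lo < Real.pi := by
    by_contra hge
    push_neg at hge
    have hmem : lo + Real.pi ∈ Set.Icc lo hi :=
      ⟨by linarith [Real.pi_pos], by linarith⟩
    have hloK : lo ∈ K := ⟨xlo, hxloS, hxloθ⟩
    have hhiK : hi ∈ K := ⟨xhi, hxhiS, hxhiθ⟩
    have hsub : Set.Icc lo hi ⊆ K := hKconn.Icc_subset hloK hhiK
    obtain ⟨x', hx'S, hx'θ⟩ := hsub hmem
    set r1 := ‖h x'‖ with hr1d
    set r2 := ‖h xlo‖ with hr2d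
    have hr1 : 0 < r1 := norm_pos_iff.mpr (hh0 x' (hSne _ hx'S))
    have hr2 : 0 < r2 := norm_pos_iff.mpr (hh0 xlo (hSne _ hxloS))
    have e1 : (r1:ℂ) * Complex.exp (↑(θ x') * Complex.I) = h x' :=
      Complex.norm_mul_exp_arg_mul_I _
    have e2 : (r2:ℂ) * Complex.exp (↑(θ xlo) * Complex.I) = h xlo :=
      Complex.norm_mul_exp_arg_mul_I _
    apply key x' xlo hx'S hxloS (-(r1/r2)) (by
      have := div_pos hr1 hr2
      linarith)
    rw [← e1, ← e2, hx'θ, hxloθ]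
    push_cast
    rw [add_mul, Complex.exp_add, Complex.exp_pi_mul_I]
    have hr2ne : (r2:ℂ) ≠ 0 := by exact_mod_cast hr2.ne'
    field_simp
  set m := (hi + lo)/2 with hm
  have hbound : ∀ x ∈ S, |θ x - m| < Real.pi/2 := by
    intro x hxS
    have hmem : θ x ∈ K := ⟨x, hxS, rfl⟩
    have h1 : lo ≤ θ x := csInf_le hKcpt.bddBelow hmem
    have h2 : θ x ≤ hi := le_csSup hKcpt.bddAbove hmem
    rw [abs_lt]
    constructor <;> linarith
  set c : ℂ := Complex.exp (↑m * Complex.I) * g₀ with hc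
  have pos : ∀ x ∈ S, 0 < c.re * (x ⬝ᵥ A *ᵥ x) + c.im * (x ⬝ᵥ B *ᵥ x) := by
    intro x hxS
    have hkey : ∀ z w : ℂ, w.re * z.re + w.im * z.im = ((starRingEnd ℂ) w * z).re := by
      intro z w
      rw [Complex.mul_re, Complex.conj_re, Complex.conj_im]
      ring
    rw [← hgre x, ← hgim x, hkey (g x) c]
    have hcc : (starRingEnd ℂ) c * g x
        = (↑(‖h x‖) : ℂ) * Complex.exp (↑(θ x - m) * Complex.I) := by
      rw [hc, _root_.map_mul]
      have hce : (starRingEnd ℂ) (Complex.exp (↑m * Complex.I))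
          = Complex.exp (-(↑m * Complex.I)) := by
        rw [← Complex.exp_conj]
        congr 1
        simp [Complex.conj_ofReal]
      rw [hce]
      have habs : h x = (↑(‖h x‖) : ℂ) * Complex.exp (↑(θ x) * Complex.I) :=
        (Complex.norm_mul_exp_arg_mul_I _).symm
      calc Complex.exp (-(↑m * Complex.I)) * (starRingEnd ℂ) g₀ * g x
          = Complex.exp (-(↑m * Complex.I)) * h x := by rw [hh]; ring
        _ = Complex.exp (-(↑m * Complex.I)) *
              ((↑(‖h x‖) : ℂ) * Complex.exp (↑(θ x) * Complex.I)) := by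
            rw [← habs]
        _ = (↑(‖h x‖) : ℂ) * Complex.exp (↑(θ x - m) * Complex.I) := by
            have hsplit : (↑(θ x - m) : ℂ) * Complex.I = -(↑m * Complex.I) + ↑(θ x) * Complex.I := by
              push_cast
              ring
            rw [hsplit, Complex.exp_add]
            ring
    rw [hcc]
    rw [Complex.re_ofReal_mul, Complex.exp_ofReal_mul_I_re]
    apply mul_pos (norm_pos_iff.mpr (hh0 x (hSne _ hxS)))
    apply Real.cos_pos_of_mem_Ioo
    have := abs_lt.mp (hbound x hxS)
    exact ⟨by linarith, this.2⟩
  refine ⟨c.re, c.im, Matrix.PosDef.of_dotProduct_mulVec_pos ?_ ?_⟩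
  · apply isHermitian_of_isSymm
    rw [Matrix.IsSymm, transpose_add, transpose_smul, transpose_smul, hA, hB]
  · intro x hx
    have hne : ‖x‖ ≠ 0 := norm_ne_zero_iff.mpr hx
    set v : Fin n → ℝ := ‖x‖⁻¹ • x with hv
    have hvS : v ∈ S := by
      rw [hS, mem_sphere_zero_iff_norm, hv, norm_smul, norm_inv, norm_norm]
      exact inv_mul_cancel₀ hne
    have hxv : x = ‖x‖ • v := (smul_inv_smul₀ hne x).symm
    have hquad : x ⬝ᵥ (c.re • A + c.im • B) *ᵥ x
        = ‖x‖^2 * (v ⬝ᵥ (c.re • A + c.im • B) *ᵥ v) := by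
      have hq2 := quad_smul (c.re • A + c.im • B) ‖x‖ v
      rw [← hxv] at hq2
      exact hq2
    have hvpos : 0 < v ⬝ᵥ (c.re • A + c.im • B) *ᵥ v := by
      rw [quad_comb]
      exact pos v hvS
    have : 0 < x ⬝ᵥ (c.re • A + c.im • B) *ᵥ x := by
      rw [hquad]
      exact mul_pos (pow_pos (norm_pos_iff.mpr hx) 2) hvpos
    simpa using this

end Stmt1Aux

open Stmt1Aux


/-- `II_≻(A,B) ≠ ∅` implies `Q(A) ∩ Q(B) = {0}`; conversely if `n ≥ 3`
and `Q(A) ∩ Q(B) = {0}` then `II_≻(A,B) ≠ ∅`. -/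
theorem stmt_1 {n : ℕ} (A B : Matrix (Fin n) (Fin n) ℝ)
    (hA : A.IsSymm) (hB : B.IsSymm) :
    ((∃ μ σ : ℝ, (μ • A + σ • B).PosDef) →
      {v : Fin n → ℝ | v ⬝ᵥ A *ᵥ v = 0} ∩ {v : Fin n → ℝ | v ⬝ᵥ B *ᵥ v = 0} = {0}) ∧
    (3 ≤ n →
      {v : Fin n → ℝ | v ⬝ᵥ A *ᵥ v = 0} ∩ {v : Fin n → ℝ | v ⬝ᵥ B *ᵥ v = 0} = {0} →
      ∃ μ σ : ℝ, (μ • A + σ • B).PosDef) := by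
  constructor
  · rintro ⟨μ, σ, hPD⟩
    apply Set.eq_singleton_iff_unique_mem.mpr
    constructor
    · exact ⟨by simp [Set.mem_setOf_eq], by simp [Set.mem_setOf_eq]⟩
    · rintro x ⟨h1, h2⟩
      rw [Set.mem_setOf_eq] at h1 h2
      by_contra hx
      have hpos := hPD.dotProduct_mulVec_pos hx
      rw [star_trivial] at hpos
      have hzero : x ⬝ᵥ (μ • A + σ • B) *ᵥ x = 0 := by
        rw [quad_comb, h1, h2]
        ring
      rw [hzero] at hpos
      exact lt_irrefl 0 hpos
  · intro hn hset
    have hQ : ∀ x : Fin n → ℝ, x ⬝ᵥ A *ᵥ x = 0 → x ⬝ᵥ B *ᵥ x = 0 → x = 0 := by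
      intro x h1 h2
      have hx : x ∈ ({0} : Set (Fin n → ℝ)) := by
        rw [← hset]
        exact ⟨h1, h2⟩
      simpa using hx
    exact converse A B hA hB hn hQ
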